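/- Suppose I is an open interval of real numbers and φ ∈ Homeo⁺(I) is such that the set of fixed points of φ has Lebesgue measure zero. Then for every nonempty set S there exists a good S-predictor on I that is anonymous with respect to the cyclic group ⟨φ⟩ generated by φ. -/

import Mathlib

open MeasureTheory Set

namespace Stmt5Aux
lemma countable_of_strict {α : Type*} {r : α → α → Prop} (wf : WellFounded r) (D : Set ℝ)
    (f : ℝ → α) (hf : ∀ a ∈ D, ∀ b ∈ D, a < b → r (f a) (f b)) : D.Countable := by
  have hwf : WellFounded (fun a b : D => (a : ℝ) < (b : ℝ)) := by
    have hinv : WellFounded (InvImage r (fun a : D => f a)) := InvImage.wf _ wf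
    exact Subrelation.wf (fun {a b} h => hf a a.2 b b.2 h) hinv
  classical
  set y : ℝ → ℝ := fun a =>
    if h : {b : D | a < (b : ℝ)}.Nonempty then (hwf.min {b : D | a < (b : ℝ)} h : ℝ) else a + 1
    with hy
  have hlt : ∀ a : ℝ, a < y a := by
    intro a
    by_cases h : {b : D | a < (b : ℝ)}.Nonempty
    · simp only [hy, dif_pos h]
      exact hwf.min_mem {b : D | a < (b : ℝ)} h
    · simp only [hy, dif_neg h]
      linarith
  have hle : ∀ a : ℝ, ∀ b : D, a < (b : ℝ) → y a ≤ (b : ℝ) := by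
    intro a b hab
    have h : {c : D | a < (c : ℝ)}.Nonempty := ⟨b, hab⟩
    simp only [hy, dif_pos h]
    have := hwf.not_lt_min {c : D | a < (c : ℝ)} (Set.mem_setOf.mpr hab)
    exact not_lt.mp this
  have key : ∀ a ∈ D, ∀ b ∈ D, a < b → Disjoint (Ioo a (y a)) (Ioo b (y b)) := by
    intro a _ b hb hab
    have hya : y a ≤ b := hle a ⟨b, hb⟩ hab
    rw [Set.disjoint_left]
    intro u hu hu'
    exact absurd (hu.2.trans_le hya) (not_lt.mpr hu'.1.le)
  have hpd : D.PairwiseDisjoint fun a => Ioo a (y a) := by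
    intro a ha b hb hne
    rcases hne.lt_or_gt with h | h
    · exact key a ha b hb h
    · exact (key b hb a ha h).symm
  exact hpd.countable_of_Ioo fun a _ => hlt a
lemma wfwo {α : Type*} : WellFounded (WellOrderingRel : α → α → Prop) :=
  IsWellFounded.wf

lemma min_congr {α : Type*} {r : α → α → Prop} (wf : WellFounded r) {s1 s2 : Set α}
    (h : s1 = s2) (h1 : s1.Nonempty) (h2 : s2.Nonempty) :
    wf.min s1 h1 = wf.min s2 h2 := by subst h; rfl

variable {I : Set ℝ} {S : Type*}

def valid (φ : Equiv.Perm I) (F : I → S) (t : I) (G : I → S) (n : ℤ) : Prop :=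
  ∀ x : I, x < (φ ^ n) t → G x = F ((φ ^ n)⁻¹ x)

def A (φ : Equiv.Perm I) (F : I → S) (t : I) : Set (I → S) := {G | ∃ n, valid φ F t G n}

lemma self_mem_A (φ : Equiv.Perm I) (F : I → S) (t : I) : F ∈ A φ F t :=
  ⟨0, fun x _ => by simp⟩

noncomputable def W (φ : Equiv.Perm I) (F : I → S) (t : I) : I → S :=
  wfwo.min (A φ F t) ⟨F, self_mem_A φ F t⟩

lemma W_mem (φ : Equiv.Perm I) (F : I → S) (t : I) : W φ F t ∈ A φ F t :=
  wfwo.min_mem _ _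

lemma not_lt_W {φ : Equiv.Perm I} {F : I → S} {t : I} {G : I → S} (hG : G ∈ A φ F t) :
    ¬ WellOrderingRel G (W φ F t) :=
  wfwo.not_lt_min _ hG

def V (φ : Equiv.Perm I) (F : I → S) (t : I) : Set S :=
  {s | ∃ n, valid φ F t (W φ F t) n ∧ W φ F t ((φ ^ n) t) = s}

lemma V_nonempty (φ : Equiv.Perm I) (F : I → S) (t : I) : (V φ F t).Nonempty := by
  obtain ⟨n, hn⟩ := W_mem φ F t
  exact ⟨_, n, hn, rfl⟩

noncomputable def P (φ : Equiv.Perm I) (F : I → S) (t : I) : S :=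
  wfwo.min (V φ F t) (V_nonempty φ F t)

lemma P_mem (φ : Equiv.Perm I) (F : I → S) (t : I) : P φ F t ∈ V φ F t :=
  wfwo.min_mem _ _

lemma strictMono_inv' (ψ : Equiv.Perm I) (h : StrictMono ⇑ψ) : StrictMono ⇑(ψ⁻¹) := by
  intro a b hab
  have h2 := h.lt_iff_lt (a := ψ⁻¹ a) (b := ψ⁻¹ b)
  rw [Equiv.Perm.inv_def, Equiv.apply_symm_apply, Equiv.apply_symm_apply] at h2
  exact h2.mp hab

lemma sm (φ : Equiv.Perm I) (hmono : StrictMono ⇑φ) (n : ℤ) : StrictMono ⇑(φ ^ n) := by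
  induction n using Int.induction_on with
  | zero => simp only [zpow_zero, Equiv.Perm.coe_one]; exact strictMono_id
  | succ k ih => rw [zpow_add_one]; intro a b hab; simp only [Equiv.Perm.mul_apply]; exact ih (hmono hab)
  | pred k ih => rw [zpow_sub_one]; intro a b hab; simp only [Equiv.Perm.mul_apply]
                 exact ih (strictMono_inv' φ hmono hab)

lemma smi (φ : Equiv.Perm I) (hmono : StrictMono ⇑φ) (n : ℤ) : StrictMono ⇑((φ ^ n)⁻¹) :=
  strictMono_inv' _ (sm φ hmono n)

lemma valid_congr (φ : Equiv.Perm I) (hmono : StrictMono ⇑φ) {F F' : I → S} {t : I}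
    (h : ∀ x : I, x < t → F x = F' x) (G : I → S) (n : ℤ) :
    valid φ F t G n ↔ valid φ F' t G n := by
  have key : ∀ x : I, x < (φ ^ n) t → ((φ ^ n)⁻¹ x) < t := fun x hx => by
    have h2 := smi φ hmono n hx
    rwa [Equiv.Perm.inv_def, Equiv.symm_apply_apply] at h2
  constructor
  · intro hv x hx
    rw [hv x hx, h _ (key x hx)]
  · intro hv x hx
    rw [hv x hx, h _ (key x hx)]

lemma valid_mono (φ : Equiv.Perm I) (hmono : StrictMono ⇑φ) {F : I → S} {t t' : I} {G : I → S}
    {n : ℤ} (h : valid φ F t' G n) (htt' : t < t') :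
    valid φ F t G n ∧ G ((φ ^ n) t) = F t := by
  have hlt : (φ ^ n) t < (φ ^ n) t' := sm φ hmono n htt'
  refine ⟨fun x hx => h x (hx.trans hlt), ?_⟩
  have h2 := h ((φ ^ n) t) hlt
  rwa [Equiv.Perm.inv_def, Equiv.symm_apply_apply] at h2

lemma valid_shift (φ : Equiv.Perm I) (F : I → S) (t : I) (G : I → S) (k n : ℤ) :
    valid φ (F ∘ ⇑(φ ^ k)) ((φ ^ k)⁻¹ t) G n ↔ valid φ F t G (n - k) := by
  have h1 : ∀ u : I, (φ ^ n) ((φ ^ k)⁻¹ u) = (φ ^ (n - k)) u := fun u => by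
    rw [zpow_sub, Equiv.Perm.mul_apply]
  have h2 : ∀ u : I, (φ ^ (n - k))⁻¹ u = (φ ^ k) ((φ ^ n)⁻¹ u) := fun u => by
    rw [← zpow_neg, neg_sub, zpow_sub, Equiv.Perm.mul_apply]
  constructor
  · intro hv x hx
    rw [← h1 t] at hx
    have h3 := hv x hx
    rwa [Function.comp_apply, ← h2] at h3
  · intro hv x hx
    rw [h1 t] at hx
    have h3 := hv x hx
    rw [Function.comp_apply, ← h2]
    exact h3

-- congruence under agreement below t
lemma A_congr (φ : Equiv.Perm I) (hmono : StrictMono ⇑φ) {F F' : I → S} {t : I}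
    (h : ∀ x : I, x < t → F x = F' x) : A φ F t = A φ F' t := by
  ext G
  exact exists_congr fun n => valid_congr φ hmono h G n

lemma W_congr (φ : Equiv.Perm I) (hmono : StrictMono ⇑φ) {F F' : I → S} {t : I}
    (h : ∀ x : I, x < t → F x = F' x) : W φ F t = W φ F' t :=
  min_congr wfwo (A_congr φ hmono h) _ _

lemma V_congr (φ : Equiv.Perm I) (hmono : StrictMono ⇑φ) {F F' : I → S} {t : I}
    (h : ∀ x : I, x < t → F x = F' x) : V φ F t = V φ F' t := by
  have hW := W_congr φ hmono h
  ext s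
  unfold V
  rw [hW]
  exact exists_congr fun n => and_congr_left' (valid_congr φ hmono h _ n)

lemma P_congr (φ : Equiv.Perm I) (hmono : StrictMono ⇑φ) {F F' : I → S} {t : I}
    (h : ∀ x : I, x < t → F x = F' x) : P φ F t = P φ F' t :=
  min_congr wfwo (V_congr φ hmono h) _ _

-- shift invariance
lemma A_shift (φ : Equiv.Perm I) (F : I → S) (t : I) (k : ℤ) :
    A φ (F ∘ ⇑(φ ^ k)) ((φ ^ k)⁻¹ t) = A φ F t := by
  ext G
  constructor
  · rintro ⟨n, hn⟩
    exact ⟨n - k, (valid_shift φ F t G k n).mp hn⟩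
  · rintro ⟨n, hn⟩
    refine ⟨n + k, (valid_shift φ F t G k (n + k)).mpr ?_⟩
    rwa [add_sub_cancel_right]

lemma W_shift (φ : Equiv.Perm I) (F : I → S) (t : I) (k : ℤ) :
    W φ (F ∘ ⇑(φ ^ k)) ((φ ^ k)⁻¹ t) = W φ F t :=
  min_congr wfwo (A_shift φ F t k) _ _

lemma V_shift (φ : Equiv.Perm I) (F : I → S) (t : I) (k : ℤ) :
    V φ (F ∘ ⇑(φ ^ k)) ((φ ^ k)⁻¹ t) = V φ F t := by
  have hW := W_shift φ F t k
  have h1 : ∀ n : ℤ, (φ ^ n) ((φ ^ k)⁻¹ t) = (φ ^ (n - k)) t := fun n => by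
    rw [zpow_sub, Equiv.Perm.mul_apply]
  ext s
  unfold V
  rw [hW]
  constructor
  · rintro ⟨n, hn, rfl⟩
    exact ⟨n - k, (valid_shift φ F t _ k n).mp hn, by rw [h1 n]⟩
  · rintro ⟨n, hn, rfl⟩
    refine ⟨n + k, (valid_shift φ F t _ k (n + k)).mpr (by rwa [add_sub_cancel_right]), ?_⟩
    rw [h1 (n + k), add_sub_cancel_right]

lemma P_shift (φ : Equiv.Perm I) (F : I → S) (t : I) (k : ℤ) :
    P φ (F ∘ ⇑(φ ^ k)) ((φ ^ k)⁻¹ t) = P φ F t :=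
  min_congr wfwo (V_shift φ F t k) _ _

-- W is monotone along t
lemma not_lt_W_of_lt (φ : Equiv.Perm I) (hmono : StrictMono ⇑φ) (F : I → S) {t t' : I}
    (htt' : t < t') : ¬ WellOrderingRel (W φ F t') (W φ F t) := by
  obtain ⟨n, hn⟩ := W_mem φ F t'
  exact not_lt_W ⟨n, (valid_mono φ hmono hn htt').1⟩

def D (φ : Equiv.Perm I) (F : I → S) : Set I :=
  {t | ∀ t' : I, t < t' → W φ F t' ≠ W φ F t}

def B (φ : Equiv.Perm I) (F : I → S) (G : I → S) (m n : ℤ) : Set I :=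
  {t | valid φ F t G m ∧ valid φ F t G n ∧ G ((φ ^ m) t) ≠ G ((φ ^ n) t)}

open Classical in
noncomputable def B' (φ : Equiv.Perm I) (F : I → S) (q : ℚ) (m n : ℤ) : Set I :=
  if h : (q : ℝ) ∈ I then B φ F (W φ F ⟨(q : ℝ), h⟩) m n else ∅

lemma tri (G G' : I → S) (h1 : ¬ WellOrderingRel G G') (h2 : ¬ WellOrderingRel G' G) :
    G = G' := by
  rcases trichotomous_of WellOrderingRel G G' with h | h | h
  · exact absurd h h1
  · exact h
  · exact absurd h h2

lemma B_subsingleton (φ : Equiv.Perm I) (hmono : StrictMono ⇑φ) (F : I → S) (G : I → S)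
    (m n : ℤ) : (B φ F G m n).Subsingleton := by
  have key : ∀ t ∈ B φ F G m n, ∀ t' ∈ B φ F G m n, t < t' → False := by
    intro t ht t' ht' htt'
    have hm := (valid_mono φ hmono ht'.1 htt').2
    have hn := (valid_mono φ hmono ht'.2.1 htt').2
    exact ht.2.2 (hm.trans hn.symm)
  intro t ht t' ht'
  rcases lt_trichotomy t t' with h | h | h
  · exact absurd (key t ht t' ht' h) (by simp)
  · exact h
  · exact absurd (key t' ht' t ht h) (by simp)

lemma D_countable (φ : Equiv.Perm I) (hmono : StrictMono ⇑φ) (F : I → S) :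
    (D φ F).Countable := by
  classical
  set f : ℝ → (I → S) := fun x => if h : x ∈ I then W φ F ⟨x, h⟩ else F with hf
  have himg : (Subtype.val '' D φ F).Countable := by
    apply countable_of_strict wfwo _ f
    rintro a ⟨ta, hta, rfl⟩ b ⟨tb, htb, rfl⟩ hab
    have hab' : ta < tb := Subtype.coe_lt_coe.mp hab
    have hfa : f (ta : ℝ) = W φ F ta := by simp [hf, ta.2]
    have hfb : f (tb : ℝ) = W φ F tb := by simp [hf, tb.2]
    rw [hfa, hfb]
    have h1 : W φ F tb ≠ W φ F ta := hta tb hab'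
    have h2 : ¬ WellOrderingRel (W φ F tb) (W φ F ta) := not_lt_W_of_lt φ hmono F hab'
    rcases trichotomous_of WellOrderingRel (W φ F ta) (W φ F tb) with h | h | h
    · exact h
    · exact absurd h.symm h1
    · exact absurd h h2
  have := himg.preimage (Subtype.coe_injective : Function.Injective (Subtype.val : I → ℝ))
  exact this.mono (subset_preimage_image _ _)

lemma E_cover (φ : Equiv.Perm I) (hmono : StrictMono ⇑φ) (hIconn : I.OrdConnected)
    (F : I → S) :
    {t : I | P φ F t ≠ F t} ⊆ D φ F ∪ ⋃ q : ℚ, ⋃ m : ℤ, ⋃ n : ℤ, B' φ F q m n := by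
  intro t htE
  by_cases htD : t ∈ D φ F
  · exact Or.inl htD
  right
  simp only [D, mem_setOf_eq, not_forall] at htD
  obtain ⟨t', htt', hWt'⟩ := htD
  rw [not_not] at hWt'
  -- find a rational strictly between t and t'
  obtain ⟨q, hq1, hq2⟩ := exists_rat_btwn (Subtype.coe_lt_coe.mpr htt')
  have hqI : (q : ℝ) ∈ I := hIconn.out t.2 t'.2 ⟨hq1.le, hq2.le⟩
  set tq : I := ⟨(q : ℝ), hqI⟩ with htq
  have htq1 : t < tq := Subtype.coe_lt_coe.mp hq1
  have htq2 : tq < t' := Subtype.coe_lt_coe.mp hq2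
  have ha : ¬ WellOrderingRel (W φ F tq) (W φ F t) := not_lt_W_of_lt φ hmono F htq1
  have hb : ¬ WellOrderingRel (W φ F t) (W φ F tq) := by
    have := not_lt_W_of_lt φ hmono F htq2
    rwa [hWt'] at this
  have hWq : W φ F tq = W φ F t := tri _ _ ha hb
  -- the shift m with value F t
  obtain ⟨m, hm⟩ := W_mem φ F t'
  rw [hWt'] at hm
  have hm2 := valid_mono φ hmono hm htt'
  -- the shift n with value P φ F t
  obtain ⟨n, hn, hval⟩ := P_mem φ F t
  have htB : t ∈ B φ F (W φ F t) m n := by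
    refine ⟨hm2.1, hn, ?_⟩
    rw [hm2.2, hval]
    exact fun h => htE h.symm
  refine mem_iUnion.mpr ⟨q, mem_iUnion.mpr ⟨m, mem_iUnion.mpr ⟨n, ?_⟩⟩⟩
  show t ∈ B' φ F q m n
  rw [B', dif_pos hqI]
  rw [← htq] at *
  rw [hWq]
  exact htB

lemma B'_subsingleton (φ : Equiv.Perm I) (hmono : StrictMono ⇑φ) (F : I → S) (q : ℚ)
    (m n : ℤ) : (B' φ F q m n).Subsingleton := by
  rw [B']
  split
  · exact B_subsingleton φ hmono F _ m n
  · exact subsingleton_empty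

lemma E_countable (φ : Equiv.Perm I) (hmono : StrictMono ⇑φ) (hIconn : I.OrdConnected)
    (F : I → S) : {t : I | P φ F t ≠ F t}.Countable := by
  refine Set.Countable.mono (E_cover φ hmono hIconn F) ?_
  refine (D_countable φ hmono F).union ?_
  refine countable_iUnion fun q => countable_iUnion fun m => countable_iUnion fun n => ?_
  exact (B'_subsingleton φ hmono F q m n).countable

end Stmt5Aux


/-- If `I` is an open interval of reals (open, order-connected, nonempty subset of `ℝ`) and
`φ ∈ Homeo⁺(I)` (modelled as a strictly monotone permutation of `I`) has a fixed point set
of Lebesgue measure zero, then for every (nonempty) set `S` there is a good `S`-predictor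
on `I` that is anonymous with respect to the cyclic group `⟨φ⟩ = {φ^n : n ∈ ℤ}`.
A predictor is encoded as `P : I → (I → S) → S`, where `P t F` is the prediction from `F`
restricted to `{x ∈ I : x < t}` (so `P t` depends only on those values). -/
theorem stmt_5 (I : Set ℝ) (hIopen : IsOpen I) (hIconn : I.OrdConnected) (hIne : I.Nonempty)
    (φ : Equiv.Perm I) (hmono : StrictMono (⇑φ))
    (hfixnull : volume {x : ℝ | ∃ hx : x ∈ I, φ ⟨x, hx⟩ = ⟨x, hx⟩} = 0)
    (S : Type*) [Nonempty S] :
    ∃ P : I → (I → S) → S,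
      (∀ (t : I) (F G : I → S), (∀ x : I, x < t → F x = G x) → P t F = P t G) ∧
      (∀ F : I → S,
        volume {t : ℝ | ∃ ht : t ∈ I, P ⟨t, ht⟩ F ≠ F ⟨t, ht⟩} = 0) ∧
      (∀ (n : ℤ) (t : I) (F : I → S), P t F = P ((φ ^ n)⁻¹ t) (F ∘ ⇑(φ ^ n))) := by
  refine ⟨fun t F => Stmt5Aux.P φ F t, ?_, ?_, ?_⟩
  · intro t F G h
    exact Stmt5Aux.P_congr φ hmono h
  · intro F
    have hset : {t : ℝ | ∃ ht : t ∈ I, Stmt5Aux.P φ F ⟨t, ht⟩ ≠ F ⟨t, ht⟩}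
        = Subtype.val '' {t : I | Stmt5Aux.P φ F t ≠ F t} := by
      ext x
      simp only [mem_setOf_eq, mem_image]
      constructor
      · rintro ⟨hx, hne⟩
        exact ⟨⟨x, hx⟩, hne, rfl⟩
      · rintro ⟨⟨x', hx'⟩, hne, rfl⟩
        exact ⟨hx', hne⟩
    rw [hset]
    exact ((Stmt5Aux.E_countable φ hmono hIconn F).image _).measure_zero _
  · intro n t F
    exact (Stmt5Aux.P_shift φ F t n).symm
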